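/- Let E be a real normed vector space, U ⊆ E open. Let Φ : E → ℍ be continuously differentiable on U with imaginary values, and let A : E → E → ℍ be twice continuously differentiable in the first variable, linear in the second, with imaginary values. Define the covariant derivative (d_AΦ) x v := fderiv ℝ Φ x v + (A x v)*(Φ x) − (Φ x)*(A x v), the curvature F x (v, w) := fderiv ℝ (fun y => A y w) x v − fderiv ℝ (fun y => A y v) x w + (A x v)*(A x w) − (A x w)*(A x v), and the real two-form β x (v, w) := re(conj(Φ x) * F x (v, w)). Then for every x ∈ U and u, v, w ∈ E: fderiv ℝ (fun y => β y (v, w)) x u − fderiv ℝ (fun y => β y (u, w)) x v + fderiv ℝ (fun y => β y (u, v)) x w = re(conj((d_AΦ) x u) * F x (v, w)) − re(conj((d_AΦ) x v) * F x (u, w)) + re(conj((d_AΦ) x w) * F x (u, v)). In form language this says that the three-form Z(Φ, A) = 2 Re(d_A Φ̄ ∧ F_A) is exact: Z(Φ, A) = 2 d β(Φ, A) with β(Φ, A) = Re(Φ̄ F_A). -/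

import Mathlib

open scoped RealInnerProductSpace

private lemma Zalg_re_mul_comm (a b : Quaternion ℝ) : (a * b).re = (b * a).re := by
  simp only [Quaternion.re_mul]; ring

private lemma Zalg (p pu pv pw au av aw duv dvu duw dwu dvw dwv s1 s2 s3 : Quaternion ℝ)
    (hp : p.re = 0) (hau : au.re = 0) (hav : av.re = 0) (haw : aw.re = 0) :
    ((dvw - dwv + av * aw - aw * av) * star pu).re
      + ((s1 - s2 + (duv * aw + av * duw) - (duw * av + aw * duv)) * star p).re
    - (((duw - dwu + au * aw - aw * au) * star pv).re
      + ((s1 - s3 + (dvu * aw + au * dvw) - (dvw * au + aw * dvu)) * star p).re)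
    + (((duv - dvu + au * av - av * au) * star pw).re
      + ((s2 - s3 + (dwu * av + au * dwv) - (dwv * au + av * dwu)) * star p).re)
    = (star (pu + au * p - p * au) * (dvw - dwv + av * aw - aw * av)).re
      - (star (pv + av * p - p * av) * (duw - dwu + au * aw - aw * au)).re
      + (star (pw + aw * p - p * aw) * (duv - dvu + au * av - av * au)).re := by
  simp only [Quaternion.re_mul, Quaternion.imI_mul, Quaternion.imJ_mul, Quaternion.imK_mul,
    Quaternion.re_add, Quaternion.imI_add, Quaternion.imJ_add, Quaternion.imK_add,
    Quaternion.re_sub, Quaternion.imI_sub, Quaternion.imJ_sub, Quaternion.imK_sub,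
    Quaternion.re_star, Quaternion.imI_star, Quaternion.imJ_star, Quaternion.imK_star,
    hp, hau, hav, haw]
  ring

set_option maxHeartbeats 2000000 in
/-- Exactness of the three-form `Z(Φ, A) = 2 Re(d_AΦ̄ ∧ F_A)`: with
`β(Φ, A) = Re(Φ̄ F_A)`, one has `Z(Φ, A) = 2 dβ(Φ, A)`, expressed here componentwise:
the antisymmetrized derivative of `β` equals `Re(conj(d_AΦ) ∧ F_A)` componentwise. -/
theorem Z_is_exact {E : Type*} [NormedAddCommGroup E] [NormedSpace ℝ E]
    (U : Set E) (hU : IsOpen U)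
    (Φ : E → Quaternion ℝ) (hΦ : ContDiffOn ℝ 1 Φ U)
    (hΦim : ∀ x ∈ U, (Φ x).re = 0)
    (A : E → E → Quaternion ℝ)
    (hAsmooth : ∀ v : E, ContDiffOn ℝ 2 (fun y => A y v) U)
    (hAlin : ∀ x, IsLinearMap ℝ (A x))
    (hAim : ∀ x v, (A x v).re = 0)
    (dAΦ : E → E → Quaternion ℝ)
    (hdAΦ : ∀ x v, dAΦ x v = fderiv ℝ Φ x v + A x v * Φ x - Φ x * A x v)
    (F : E → E → E → Quaternion ℝ)
    (hF : ∀ x v w, F x v w =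
      fderiv ℝ (fun y => A y w) x v - fderiv ℝ (fun y => A y v) x w
        + A x v * A x w - A x w * A x v)
    (β : E → E → E → ℝ)
    (hβ : ∀ x v w, β x v w = (star (Φ x) * F x v w).re) :
    ∀ x ∈ U, ∀ u v w : E,
      fderiv ℝ (fun y => β y v w) x u - fderiv ℝ (fun y => β y u w) x v
          + fderiv ℝ (fun y => β y u v) x w
        = (star (dAΦ x u) * F x v w).re - (star (dAΦ x v) * F x u w).re
          + (star (dAΦ x w) * F x u v).re := by
  intro x hx u v w
  have hxU : U ∈ nhds x := hU.mem_nhds hx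
  have hΦd : DifferentiableAt ℝ Φ x := ((hΦ.contDiffAt hxU).differentiableAt one_ne_zero)
  have hA2 : ∀ z : E, ContDiffAt ℝ 2 (fun y => A y z) x := fun z =>
    (hAsmooth z).contDiffAt hxU
  have hAd : ∀ z : E, DifferentiableAt ℝ (fun y => A y z) x := fun z =>
    (hA2 z).differentiableAt two_ne_zero
  have hA'd : ∀ z : E, DifferentiableAt ℝ (fderiv ℝ (fun y => A y z)) x := fun z =>
    ((hA2 z).fderiv_right (le_refl 2)).differentiableAt one_ne_zero
  have hsymm : ∀ z a b : E,
      fderiv ℝ (fderiv ℝ (fun y => A y z)) x a b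
        = fderiv ℝ (fderiv ℝ (fun y => A y z)) x b a := fun z =>
    (hA2 z).isSymmSndFDerivAt (by simp [minSmoothness_of_isRCLikeNormedField])
  -- differentiability of y ↦ (∂(A·z)) y c
  have hPd : ∀ z c : E, DifferentiableAt ℝ (fun y => fderiv ℝ (fun t => A t z) y c) x :=
    fun z c => (hA'd z).clm_apply (differentiableAt_const c)
  have hPf : ∀ z a c : E, fderiv ℝ (fun y => fderiv ℝ (fun t => A t z) y c) x a
      = fderiv ℝ (fderiv ℝ (fun t => A t z)) x a c := by
    intro z a c
    rw [fderiv_clm_apply (hA'd z) (differentiableAt_const c)]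
    simp
  -- F as an explicit function of the base point
  have hFfun : ∀ a b : E, (fun y => F y a b) = fun y =>
      fderiv ℝ (fun t => A t b) y a - fderiv ℝ (fun t => A t a) y b
        + A y a * A y b - A y b * A y a := fun a b => funext fun y => hF y a b
  have hFdiff : ∀ a b : E, DifferentiableAt ℝ (fun y => F y a b) x := by
    intro a b
    rw [hFfun]
    exact (((hPd b a).sub (hPd a b)).add ((hAd a).mul (hAd b))).sub ((hAd b).mul (hAd a))
  have hFder : ∀ a b c : E, fderiv ℝ (fun y => F y a b) x c =
      fderiv ℝ (fderiv ℝ (fun t => A t b)) x c a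
        - fderiv ℝ (fderiv ℝ (fun t => A t a)) x c b
        + (fderiv ℝ (fun t => A t a) x c * A x b + A x a * fderiv ℝ (fun t => A t b) x c)
        - (fderiv ℝ (fun t => A t b) x c * A x a + A x b * fderiv ℝ (fun t => A t a) x c) := by
    intro a b c
    rw [hFfun]
    have h := (((((hPd b a).hasFDerivAt.sub (hPd a b).hasFDerivAt)).add
        ((hAd a).hasFDerivAt.mul' (hAd b).hasFDerivAt)).sub
        ((hAd b).hasFDerivAt.mul' (hAd a).hasFDerivAt)).fderiv
    erw [h]
    simp only [ContinuousLinearMap.add_apply, ContinuousLinearMap.sub_apply,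
      ContinuousLinearMap.smul_apply, ContinuousLinearMap.smulRight_apply, smul_eq_mul,
      hPf, op_smul_eq_mul]
    abel
  -- β as an inner product
  have hβfun : ∀ a b : E, (fun y => β y a b) = fun y => ⟪F y a b, Φ y⟫ := by
    intro a b
    funext y
    rw [hβ, Quaternion.inner_def, Zalg_re_mul_comm]
  rw [hβfun v w, hβfun u w, hβfun u v,
    fderiv_inner_apply ℝ (hFdiff v w) hΦd u,
    fderiv_inner_apply ℝ (hFdiff u w) hΦd v,
    fderiv_inner_apply ℝ (hFdiff u v) hΦd w]
  rw [hFder v w u, hFder u w v, hFder u v w, hF x v w, hF x u w, hF x u v,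
    hdAΦ x u, hdAΦ x v, hdAΦ x w]
  simp only [Quaternion.inner_def]
  rw [hsymm w v u, hsymm v w u, hsymm u w v]
  exact Zalg (Φ x) (fderiv ℝ Φ x u) (fderiv ℝ Φ x v) (fderiv ℝ Φ x w)
      (A x u) (A x v) (A x w)
      (fderiv ℝ (fun t => A t v) x u) (fderiv ℝ (fun t => A t u) x v)
      (fderiv ℝ (fun t => A t w) x u) (fderiv ℝ (fun t => A t u) x w)
      (fderiv ℝ (fun t => A t w) x v) (fderiv ℝ (fun t => A t v) x w)
      (fderiv ℝ (fderiv ℝ (fun t => A t w)) x u v)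
      (fderiv ℝ (fderiv ℝ (fun t => A t v)) x u w)
      (fderiv ℝ (fderiv ℝ (fun t => A t u)) x v w)
      (hΦim x hx) (hAim x u) (hAim x v) (hAim x w)
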